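/- Let M be a Markov chain with k ≥ 1 levels in which every state can reach T along edges, and let w : S → (0,∞) be a weight function. Then for every state s ∈ S, the stochastic shortest path value satisfies val(s) ≤ w_max·(k+1)/p_min^k, where w_max := max_{s ∈ S} w(s). -/
import Mathlib


/-- A finite Markov chain: transition function `δ` (nonnegative, rows sum to 1)
together with a set `T` of absorbing target states. There is an edge `s → s'`
iff `δ s s' > 0`. -/
structure MC (S : Type) [Fintype S] [DecidableEq S] where
  δ : S → S → ℝ
  T : Finset S
  nonneg : ∀ s s' : S, 0 ≤ δ s s'
  rowsum : ∀ s : S, ∑ s' : S, δ s s' = 1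
  absorbing : ∀ t ∈ T, δ t t = 1

variable {S : Type} [Fintype S] [DecidableEq S]

/-- Edge relation of a Markov chain: `s → s'` iff `δ s s' > 0`. -/
def MC.edge (M : MC S) (a b : S) : Prop := 0 < M.δ a b

/-- `pathLen r n a b`: there is a path of length `n` from `a` to `b` along `r`. -/
def pathLen (r : S → S → Prop) : ℕ → S → S → Prop
  | 0 => fun a b => a = b
  | n + 1 => fun a c => ∃ b, r a b ∧ pathLen r n b c

/-- `reaches r A s`: `s` can reach the set `A` along the relation `r`. -/
def reaches (r : S → S → Prop) (A : Set S) (s : S) : Prop :=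
  ∃ n, ∃ a ∈ A, pathLen r n s a

/-- Length of a shortest path from `s` to the set `A` along `r`. -/
noncomputable def distTo (r : S → S → Prop) (A : Set S) (s : S) : ℕ :=
  sInf {n | ∃ a ∈ A, pathLen r n s a}

/-- Level `0`: the targets together with all states that cannot reach the targets. -/
def MC.level0 (M : MC S) : Set S :=
  {s | s ∈ M.T ∨ ¬ reaches M.edge (M.T : Set S) s}

/-- The levels of a Markov chain: `ℓ_0` is `level0`, and for `i ≥ 1`, `ℓ_i` is the
set of states whose shortest edge-path distance to `ℓ_0` is exactly `i`. -/
noncomputable def MC.levelSet (M : MC S) : ℕ → Set S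
  | 0 => M.level0
  | i + 1 => {s | distTo M.edge M.level0 s = i + 1}

/-- `M` has (exactly) `k` levels: `ℓ_k` is the last nonempty level. -/
def MC.hasLevels (M : MC S) (k : ℕ) : Prop :=
  (M.levelSet k).Nonempty ∧ ∀ i, k < i → M.levelSet i = ∅

/-- One-step transition matrix of the Markov chain. -/
noncomputable def MC.P (M : MC S) : Matrix S S ℝ := Matrix.of M.δ

/-- Weighted reachability value `val(s) = E_s[w(X_{t*}) · 1{t* < ∞}]`, where `t*` is
the first hitting time of `T`. Since `T` is absorbing, this equals the supremum
(monotone limit) over `n` of `∑_{t ∈ T} (δⁿ)(s,t)·w(t)`. -/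
noncomputable def MC.reachVal (M : MC S) (w : S → ℝ) (s : S) : ℝ :=
  ⨆ n : ℕ, ∑ t ∈ M.T, (M.P ^ n) s t * w t

/-- Stochastic shortest path value `val(s) = E_s[∑_{t=0}^{t*} w(X_t)]`, where `t*` is
the first hitting time of `T`: the expected weight collected strictly before `T`
(states outside `T`, counted via the `n`-step distributions) plus the expected weight
of the first target state hit. -/
noncomputable def MC.sspVal (M : MC S) (w : S → ℝ) (s : S) : ℝ :=
  (∑' n : ℕ, ∑ s' ∈ Finset.univ.filter (fun x => x ∉ M.T), (M.P ^ n) s s' * w s')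
    + M.reachVal w s

/-- Smallest positive transition probability of the Markov chain. -/
noncomputable def MC.pmin (M : MC S) : ℝ :=
  sInf {p : ℝ | 0 < p ∧ ∃ s s' : S, M.δ s s' = p}

/-- Reachability Bellman update. -/
noncomputable def MC.reachUpdate (M : MC S) (w : S → ℝ) (v : S → ℝ) : S → ℝ :=
  fun s => if s ∈ M.T then w s else ∑ s' : S, M.δ s s' * v s'

/-- SSP Bellman update. -/
noncomputable def MC.sspUpdate (M : MC S) (w : S → ℝ) (v : S → ℝ) : S → ℝ :=
  fun s => if s ∈ M.T then w s else w s + ∑ s' : S, M.δ s s' * v s'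

/-- The reduced Markov chain `M[s = ·]`: the state `s` is made absorbing (its row of
`δ` replaced by the point mass at `s`) and added to the target set. -/
def MC.reduce (M : MC S) (s : S) : MC S where
  δ := fun a b => if a = s then (if b = s then 1 else 0) else M.δ a b
  T := insert s M.T
  nonneg := by
    intro a b
    by_cases h : a = s
    · by_cases h' : b = s <;> simp [h, h']
    · simpa [h] using M.nonneg a b
  rowsum := by
    intro a
    by_cases h : a = s
    · simp [h]
    · simpa [h] using M.rowsum a
  absorbing := by
    intro t ht
    rcases Finset.mem_insert.mp ht with h | h
    · simp [h]
    · by_cases h' : t = s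
      · simp [h']
      · simpa [h'] using M.absorbing t h

/-- Probability, in `M`, of ever visiting the state `s` when starting from `a`,
i.e. `P_a(∃ t ≥ 0, X_t = s)` (computed as a reachability value after making `s`
absorbing, which does not change the dynamics before the first visit to `s`). -/
noncomputable def MC.hitProb (M : MC S) (a s : S) : ℝ :=
  (M.reduce s).reachVal (fun b => if b = s then 1 else 0) a

/-- Probability of having reached `T` within `i` steps, `P_s(∃ t ≤ i, X_t ∈ T)`;
since `T` is absorbing this equals `∑_{t ∈ T} (δ^i)(s,t)`. -/
noncomputable def MC.hitBy (M : MC S) (s : S) (i : ℕ) : ℝ :=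
  ∑ t ∈ M.T, (M.P ^ i) s t

section basics

variable (M : MC S)

lemma MC.delta_le_one (a b : S) : M.δ a b ≤ 1 := by
  have h := M.rowsum a
  calc M.δ a b ≤ ∑ b' : S, M.δ a b' :=
        Finset.single_le_sum (fun i _ => M.nonneg a i) (Finset.mem_univ b)
    _ = 1 := h

lemma MC.pminSet_fin : {p : ℝ | 0 < p ∧ ∃ s s' : S, M.δ s s' = p}.Finite := by
  apply Set.Finite.subset (Set.finite_range (fun q : S × S => M.δ q.1 q.2))
  rintro p ⟨_, s, s', rfl⟩
  exact ⟨(s, s'), rfl⟩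

lemma MC.pminSet_nonempty [Nonempty S] :
    {p : ℝ | 0 < p ∧ ∃ s s' : S, M.δ s s' = p}.Nonempty := by
  obtain ⟨s⟩ := (inferInstance : Nonempty S)
  have h := M.rowsum s
  have : ∃ b, 0 < M.δ s b := by
    by_contra hc
    push_neg at hc
    have : ∑ b : S, M.δ s b = 0 := by
      apply Finset.sum_eq_zero
      intro b _
      exact le_antisymm (hc b) (M.nonneg s b)
    simp [this] at h
  obtain ⟨b, hb⟩ := this
  exact ⟨M.δ s b, hb, s, b, rfl⟩

lemma MC.pmin_mem [Nonempty S] :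
    M.pmin ∈ {p : ℝ | 0 < p ∧ ∃ s s' : S, M.δ s s' = p} :=
  (M.pminSet_nonempty).csInf_mem M.pminSet_fin

lemma MC.pmin_pos [Nonempty S] : 0 < M.pmin := (M.pmin_mem).1

lemma MC.pmin_le_one [Nonempty S] : M.pmin ≤ 1 := by
  obtain ⟨_, s, s', h⟩ := M.pmin_mem
  rw [← h]; exact M.delta_le_one s s'

lemma MC.pmin_le [Nonempty S] {a b : S} (h : 0 < M.δ a b) : M.pmin ≤ M.δ a b :=
  csInf_le (M.pminSet_fin).bddBelow ⟨h, a, b, rfl⟩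

lemma MC.pow_nonneg (n : ℕ) (a b : S) : 0 ≤ (M.P ^ n) a b := by
  induction n generalizing a b with
  | zero => by_cases h : a = b <;> simp [Matrix.one_apply, h]
  | succ n ih =>
      rw [pow_succ, Matrix.mul_apply]
      exact Finset.sum_nonneg fun u _ => mul_nonneg (ih a u) (M.nonneg u b)

lemma MC.pow_rowsum (n : ℕ) (a : S) : ∑ b : S, (M.P ^ n) a b = 1 := by
  induction n generalizing a with
  | zero => simp [Matrix.one_apply]
  | succ n ih =>
      simp only [pow_succ, Matrix.mul_apply]
      rw [Finset.sum_comm]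
      have : ∀ u : S, ∑ b : S, (M.P ^ n) a u * M.P u b = (M.P ^ n) a u := by
        intro u
        rw [← Finset.mul_sum]
        have : ∑ b : S, M.P u b = 1 := M.rowsum u
        rw [this, mul_one]
      rw [Finset.sum_congr rfl (fun u _ => this u)]
      exact ih a

end basics


section main
set_option linter.unusedSectionVars false
variable (M : MC S) [Nonempty S]

lemma MC.path_prob (n : ℕ) : ∀ (a t : S), pathLen M.edge n a t → M.pmin ^ n ≤ (M.P ^ n) a t := by
  induction n with
  | zero =>
      intro a t h
      cases h
      simp [Matrix.one_apply]
  | succ n ih =>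
      rintro a t ⟨b, hab, hbt⟩
      rw [show M.P ^ (n+1) = M.P * M.P ^ n from pow_succ' _ _, Matrix.mul_apply, pow_succ']
      have h1 : M.pmin * M.pmin ^ n ≤ M.P a b * (M.P ^ n) b t :=
        mul_le_mul (M.pmin_le hab) (ih b t hbt)
          (_root_.pow_nonneg (le_of_lt M.pmin_pos) n) (M.nonneg a b)
      refine le_trans h1 (Finset.single_le_sum
        (f := fun u => M.P a u * (M.P ^ n) u t) (fun u _ => ?_) (Finset.mem_univ b))
      exact mul_nonneg (M.nonneg a u) (M.pow_nonneg n u t)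

lemma MC.exists_short_path {k : ℕ} (hlev : M.hasLevels k)
    (hreach : ∀ a : S, reaches M.edge (M.T : Set S) a) (s : S) :
    ∃ d ≤ k, ∃ t ∈ M.T, pathLen M.edge d s t := by
  have hne : {n | ∃ a ∈ M.level0, pathLen M.edge n s a}.Nonempty := by
    obtain ⟨n, a, ha, hp⟩ := hreach s
    exact ⟨n, a, Or.inl ha, hp⟩
  have hmem := Nat.sInf_mem hne
  obtain ⟨a, ha, hp⟩ := hmem
  have hat : a ∈ M.T := by
    rcases ha with h | h
    · exact h
    · exact absurd (hreach a) h
  refine ⟨distTo M.edge M.level0 s, ?_, a, hat, hp⟩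
  by_contra hkd
  push_neg at hkd
  obtain ⟨m, hm⟩ : ∃ m, distTo M.edge M.level0 s = m + 1 := by
    have : distTo M.edge M.level0 s ≠ 0 := by omega
    exact ⟨distTo M.edge M.level0 s - 1, by omega⟩
  have hsl : s ∈ M.levelSet (m + 1) := hm
  rw [hlev.2 (m + 1) (by omega)] at hsl
  exact hsl

lemma MC.hitBy_nonneg (s : S) (i : ℕ) : 0 ≤ M.hitBy s i :=
  Finset.sum_nonneg fun t _ => M.pow_nonneg i s t

lemma MC.hitBy_le_one (s : S) (i : ℕ) : M.hitBy s i ≤ 1 := by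
  rw [← M.pow_rowsum i s]
  exact Finset.sum_le_sum_of_subset_of_nonneg (Finset.subset_univ _)
    (fun t _ _ => M.pow_nonneg i s t)

lemma MC.hitBy_mono (s : S) (i : ℕ) : M.hitBy s i ≤ M.hitBy s (i + 1) := by
  unfold MC.hitBy
  rw [pow_succ]
  simp only [Matrix.mul_apply]
  rw [Finset.sum_comm]
  have heq : ∀ u : S, ∑ t ∈ M.T, (M.P ^ i) s u * M.P u t
      = (M.P ^ i) s u * ∑ t ∈ M.T, M.P u t := fun u => (Finset.mul_sum _ _ _).symm
  rw [Finset.sum_congr rfl fun u _ => heq u]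
  have h1 : ∀ u ∈ M.T, (M.P ^ i) s u ≤ (M.P ^ i) s u * ∑ t ∈ M.T, M.P u t := by
    intro u hu
    have : (1 : ℝ) ≤ ∑ t ∈ M.T, M.P u t :=
      calc (1 : ℝ) = M.P u u := (M.absorbing u hu).symm
        _ ≤ ∑ t ∈ M.T, M.P u t :=
          Finset.single_le_sum (f := fun t => M.P u t) (fun t _ => M.nonneg u t) hu
    nlinarith [M.pow_nonneg i s u]
  calc ∑ t ∈ M.T, (M.P ^ i) s t ≤ ∑ u ∈ M.T, (M.P ^ i) s u * ∑ t ∈ M.T, M.P u t :=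
        Finset.sum_le_sum h1
    _ ≤ ∑ u : S, (M.P ^ i) s u * ∑ t ∈ M.T, M.P u t := by
        apply Finset.sum_le_sum_of_subset_of_nonneg (Finset.subset_univ _)
        intro u _ _
        exact mul_nonneg (M.pow_nonneg i s u)
          (Finset.sum_nonneg fun t _ => M.nonneg u t)

lemma MC.hitBy_mono' (s : S) {i j : ℕ} (h : i ≤ j) : M.hitBy s i ≤ M.hitBy s j := by
  induction j with
  | zero => simp_all
  | succ j ih =>
      rcases Nat.lt_or_ge i (j + 1) with h' | h'
      · exact le_trans (ih (by omega)) (M.hitBy_mono s j)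
      · have : i = j + 1 := by omega
        simp [this]

lemma MC.hitBy_k {k : ℕ} (hlev : M.hasLevels k)
    (hreach : ∀ a : S, reaches M.edge (M.T : Set S) a) (s : S) :
    M.pmin ^ k ≤ M.hitBy s k := by
  obtain ⟨d, hdk, t, ht, hp⟩ := M.exists_short_path hlev hreach s
  have h1 : M.pmin ^ k ≤ M.pmin ^ d :=
    pow_le_pow_of_le_one (le_of_lt M.pmin_pos) M.pmin_le_one hdk
  have h2 : M.pmin ^ d ≤ (M.P ^ d) s t := M.path_prob d s t hp
  have h3 : (M.P ^ d) s t ≤ M.hitBy s d :=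
    Finset.single_le_sum (fun u _ => M.pow_nonneg d s u) ht
  exact le_trans h1 (le_trans h2 (le_trans h3 (M.hitBy_mono' s hdk)))

/-- probability of being outside `T` after `n` steps -/
noncomputable def MC.qq (s : S) (n : ℕ) : ℝ :=
  ∑ s' ∈ Finset.univ.filter (fun x => x ∉ M.T), (M.P ^ n) s s'

lemma MC.qq_nonneg (s : S) (n : ℕ) : 0 ≤ M.qq s n :=
  Finset.sum_nonneg fun t _ => M.pow_nonneg n s t

lemma MC.qq_add_hitBy (s : S) (n : ℕ) : M.hitBy s n + M.qq s n = 1 := by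
  unfold MC.hitBy MC.qq
  rw [← M.pow_rowsum n s, ← Finset.sum_filter_add_sum_filter_not Finset.univ
    (fun x => x ∈ M.T)]
  congr 1
  apply Finset.sum_congr _ (fun _ _ => rfl)
  ext t
  simp

lemma MC.qq_le_one (s : S) (n : ℕ) : M.qq s n ≤ 1 := by
  have := M.qq_add_hitBy s n
  have := M.hitBy_nonneg s n
  linarith

lemma MC.pow_diag_target {u : S} (hu : u ∈ M.T) (n : ℕ) : (M.P ^ n) u u = 1 := by
  induction n with
  | zero => simp [Matrix.one_apply]
  | succ n ih =>
      have hle : (M.P ^ (n + 1)) u u ≤ 1 := by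
        rw [← M.pow_rowsum (n + 1) u]
        exact Finset.single_le_sum (fun t _ => M.pow_nonneg (n + 1) u t)
          (Finset.mem_univ u)
      have hge : (1 : ℝ) ≤ (M.P ^ (n + 1)) u u := by
        rw [pow_succ', Matrix.mul_apply]
        have h1 : (1 : ℝ) = M.P u u * (M.P ^ n) u u := by
          rw [show M.P u u = 1 from M.absorbing u hu, ih, mul_one]
        rw [h1]
        exact Finset.single_le_sum
          (fun t _ => mul_nonneg (M.nonneg u t) (M.pow_nonneg n t u))
          (Finset.mem_univ u)
      linarith

lemma MC.qq_target {u : S} (hu : u ∈ M.T) (n : ℕ) : M.qq u n = 0 := by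
  have h1 : (1 : ℝ) ≤ M.hitBy u n :=
    (M.pow_diag_target hu n) ▸ Finset.single_le_sum
      (fun t _ => M.pow_nonneg n u t) hu
  have h2 := M.hitBy_le_one u n
  have h3 := M.qq_add_hitBy u n
  linarith

lemma MC.qq_contract {k : ℕ} (hlev : M.hasLevels k)
    (hreach : ∀ a : S, reaches M.edge (M.T : Set S) a) (s : S) (n : ℕ) :
    M.qq s (n + k) ≤ (1 - M.pmin ^ k) * M.qq s n := by
  have key : M.qq s (n + k) = ∑ u : S, (M.P ^ n) s u * M.qq u k := by
    unfold MC.qq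
    rw [pow_add]
    simp only [Matrix.mul_apply]
    rw [Finset.sum_comm]
    exact Finset.sum_congr rfl fun u _ => (Finset.mul_sum _ _ _).symm
  rw [key]
  have hsplit : ∑ u : S, (M.P ^ n) s u * M.qq u k
      = ∑ u ∈ Finset.univ.filter (fun x => x ∉ M.T), (M.P ^ n) s u * M.qq u k := by
    rw [← Finset.sum_filter_add_sum_filter_not Finset.univ (fun x => x ∉ M.T)]
    have : ∑ u ∈ Finset.univ.filter (fun x => ¬ x ∉ M.T), (M.P ^ n) s u * M.qq u k = 0 := by
      apply Finset.sum_eq_zero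
      intro u hu
      simp only [Finset.mem_filter, not_not] at hu
      rw [M.qq_target hu.2, mul_zero]
    rw [this, add_zero]
  rw [hsplit]
  have hbound : ∀ u ∈ Finset.univ.filter (fun x => x ∉ M.T),
      (M.P ^ n) s u * M.qq u k ≤ (M.P ^ n) s u * (1 - M.pmin ^ k) := by
    intro u _
    apply mul_le_mul_of_nonneg_left _ (M.pow_nonneg n s u)
    have h1 := M.hitBy_k hlev hreach u
    have h2 := M.qq_add_hitBy u k
    linarith
  calc ∑ u ∈ Finset.univ.filter (fun x => x ∉ M.T), (M.P ^ n) s u * M.qq u k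
      ≤ ∑ u ∈ Finset.univ.filter (fun x => x ∉ M.T), (M.P ^ n) s u * (1 - M.pmin ^ k) :=
        Finset.sum_le_sum hbound
    _ = (1 - M.pmin ^ k) * M.qq s n := by
        unfold MC.qq
        rw [Finset.mul_sum]
        exact Finset.sum_congr rfl fun u _ => mul_comm _ _

lemma MC.pmin_pow_le_one {k : ℕ} : M.pmin ^ k ≤ 1 :=
  pow_le_one₀ (le_of_lt M.pmin_pos) M.pmin_le_one

lemma MC.qq_geo {k : ℕ} (hlev : M.hasLevels k)
    (hreach : ∀ a : S, reaches M.edge (M.T : Set S) a) (s : S) (m n : ℕ) :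
    M.qq s (n + m * k) ≤ (1 - M.pmin ^ k) ^ m := by
  induction m with
  | zero => simpa using M.qq_le_one s n
  | succ m ih =>
      have h1 : n + (m + 1) * k = (n + m * k) + k := by ring
      rw [h1, pow_succ]
      calc M.qq s ((n + m * k) + k) ≤ (1 - M.pmin ^ k) * M.qq s (n + m * k) :=
            M.qq_contract hlev hreach s (n + m * k)
        _ ≤ (1 - M.pmin ^ k) ^ m * (1 - M.pmin ^ k) := by
            rw [mul_comm]
            apply mul_le_mul_of_nonneg_right ih
            have := M.pmin_pow_le_one (k := k)
            linarith

lemma MC.qq_sum_le {k : ℕ} (hlev : M.hasLevels k)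
    (hreach : ∀ a : S, reaches M.edge (M.T : Set S) a) (s : S) (m : ℕ) :
    ∑ n ∈ Finset.range (m * k), M.qq s n ≤ (k : ℝ) * ∑ i ∈ Finset.range m, (1 - M.pmin ^ k) ^ i := by
  induction m with
  | zero => simp
  | succ m ih =>
      rw [show (m + 1) * k = m * k + k by ring, Finset.sum_range_add,
        Finset.sum_range_succ, mul_add]
      apply add_le_add ih
      calc ∑ j ∈ Finset.range k, M.qq s (m * k + j)
          ≤ ∑ _j ∈ Finset.range k, (1 - M.pmin ^ k) ^ m := by
            apply Finset.sum_le_sum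
            intro j _
            have := M.qq_geo hlev hreach s m (m * k + j - m * k)
            simpa [add_comm] using M.qq_geo hlev hreach s m j
        _ = (k : ℝ) * (1 - M.pmin ^ k) ^ m := by
            rw [Finset.sum_const, Finset.card_range, nsmul_eq_mul]

lemma MC.geo_sum_le {k : ℕ} (m : ℕ) :
    ∑ i ∈ Finset.range m, (1 - M.pmin ^ k) ^ i ≤ 1 / M.pmin ^ k := by
  have hp : (0 : ℝ) < M.pmin ^ k := pow_pos M.pmin_pos k
  have h := geom_sum_mul (1 - M.pmin ^ k) m
  have h2 : (∑ i ∈ Finset.range m, (1 - M.pmin ^ k) ^ i) * M.pmin ^ k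
      = 1 - (1 - M.pmin ^ k) ^ m := by nlinarith [h]
  rw [le_div_iff₀ hp]
  have hpow : (0 : ℝ) ≤ (1 - M.pmin ^ k) ^ m := by
    apply _root_.pow_nonneg
    have := M.pmin_pow_le_one (k := k)
    linarith
  linarith

lemma MC.qq_partial_sum_le {k : ℕ} (hk : 1 ≤ k) (hlev : M.hasLevels k)
    (hreach : ∀ a : S, reaches M.edge (M.T : Set S) a) (s : S) (N : ℕ) :
    ∑ n ∈ Finset.range N, M.qq s n ≤ (k : ℝ) / M.pmin ^ k := by
  have h1 : ∑ n ∈ Finset.range N, M.qq s n ≤ ∑ n ∈ Finset.range (N * k), M.qq s n := by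
    apply Finset.sum_le_sum_of_subset_of_nonneg
    · exact Finset.range_subset_range.2 (Nat.le_mul_of_pos_right N (by omega))
    · intro n _ _
      exact M.qq_nonneg s n
  have h2 := M.qq_sum_le hlev hreach s N
  have h3 := MC.geo_sum_le (M := M) (k := k) N
  have hk0 : (0 : ℝ) ≤ (k : ℝ) := Nat.cast_nonneg k
  calc ∑ n ∈ Finset.range N, M.qq s n ≤ (k : ℝ) * ∑ i ∈ Finset.range N, (1 - M.pmin ^ k) ^ i :=
        le_trans h1 h2
    _ ≤ (k : ℝ) * (1 / M.pmin ^ k) := by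
        apply mul_le_mul_of_nonneg_left h3 hk0
    _ = (k : ℝ) / M.pmin ^ k := by ring

end main

/-- In a Markov chain with `k ≥ 1` levels in which every state can
reach `T`, the stochastic shortest path value of every state is at most
`w_max·(k+1)/p_min^k`. -/
theorem stmt_11 {S : Type} [Fintype S] [DecidableEq S] [Nonempty S]
    (M : MC S) (k : ℕ) (hk : 1 ≤ k) (hlev : M.hasLevels k)
    (hreach : ∀ a : S, reaches M.edge (M.T : Set S) a)
    (w : S → ℝ) (hw : ∀ a : S, 0 < w a) :
    ∀ s : S, M.sspVal w s ≤ sSup (Set.range w) * ((k : ℝ) + 1) / M.pmin ^ k := by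
  intro s
  have hppos : (0 : ℝ) < M.pmin ^ k := pow_pos M.pmin_pos k
  have hple : M.pmin ^ k ≤ 1 := MC.pmin_pow_le_one M (k := k)
  have hbdd : BddAbove (Set.range w) := (Set.finite_range w).bddAbove
  set wmax := sSup (Set.range w) with hwmax
  have hwle : ∀ a, w a ≤ wmax := fun a => le_csSup hbdd ⟨a, rfl⟩
  have hwpos : 0 < wmax := lt_of_lt_of_le (hw (Classical.arbitrary S)) (hwle _)
  have hterm : ∀ n, ∑ s' ∈ Finset.univ.filter (fun x => x ∉ M.T), (M.P ^ n) s s' * w s'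
      ≤ wmax * M.qq s n := by
    intro n
    unfold MC.qq
    rw [Finset.mul_sum]
    apply Finset.sum_le_sum
    intro u _
    rw [mul_comm wmax]
    exact mul_le_mul_of_nonneg_left (hwle u) (M.pow_nonneg n s u)
  have htnonneg : ∀ n, 0 ≤ ∑ s' ∈ Finset.univ.filter (fun x => x ∉ M.T), (M.P ^ n) s s' * w s' :=
    fun n => Finset.sum_nonneg fun u _ => mul_nonneg (M.pow_nonneg n s u) (le_of_lt (hw u))
  have hpartial : ∀ N, ∑ n ∈ Finset.range N,
      (∑ s' ∈ Finset.univ.filter (fun x => x ∉ M.T), (M.P ^ n) s s' * w s')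
      ≤ wmax * ((k : ℝ) / M.pmin ^ k) := by
    intro N
    calc ∑ n ∈ Finset.range N, (∑ s' ∈ Finset.univ.filter (fun x => x ∉ M.T), (M.P ^ n) s s' * w s')
        ≤ ∑ n ∈ Finset.range N, wmax * M.qq s n := Finset.sum_le_sum fun n _ => hterm n
      _ = wmax * ∑ n ∈ Finset.range N, M.qq s n := (Finset.mul_sum _ _ _).symm
      _ ≤ wmax * ((k : ℝ) / M.pmin ^ k) :=
          mul_le_mul_of_nonneg_left (M.qq_partial_sum_le hk hlev hreach s N) (le_of_lt hwpos)
  have htsum : (∑' n : ℕ, ∑ s' ∈ Finset.univ.filter (fun x => x ∉ M.T), (M.P ^ n) s s' * w s')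
      ≤ wmax * ((k : ℝ) / M.pmin ^ k) := Real.tsum_le_of_sum_range_le htnonneg hpartial
  have hreachval : M.reachVal w s ≤ wmax := by
    unfold MC.reachVal
    apply ciSup_le
    intro n
    calc ∑ t ∈ M.T, (M.P ^ n) s t * w t
        ≤ ∑ t ∈ M.T, (M.P ^ n) s t * wmax := by
          apply Finset.sum_le_sum
          intro t _
          exact mul_le_mul_of_nonneg_left (hwle t) (M.pow_nonneg n s t)
      _ = M.hitBy s n * wmax := by
          unfold MC.hitBy
          rw [Finset.sum_mul]
      _ ≤ 1 * wmax := mul_le_mul_of_nonneg_right (M.hitBy_le_one s n) (le_of_lt hwpos)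
      _ = wmax := one_mul _
  have final : wmax * ((k : ℝ) / M.pmin ^ k) + wmax ≤ wmax * ((k : ℝ) + 1) / M.pmin ^ k := by
    have h1 : wmax * ((k : ℝ) / M.pmin ^ k) = wmax * (k : ℝ) / M.pmin ^ k := by ring
    rw [h1, div_add' _ _ _ (ne_of_gt hppos), div_le_div_iff₀ hppos hppos]
    have hkr : (0 : ℝ) ≤ (k : ℝ) := Nat.cast_nonneg k
    nlinarith [mul_le_mul_of_nonneg_left hple
      (by positivity : (0 : ℝ) ≤ wmax * M.pmin ^ k)]
  unfold MC.sspVal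
  calc (∑' n : ℕ, ∑ s' ∈ Finset.univ.filter (fun x => x ∉ M.T), (M.P ^ n) s s' * w s')
      + M.reachVal w s
      ≤ wmax * ((k : ℝ) / M.pmin ^ k) + wmax := add_le_add htsum hreachval
    _ ≤ wmax * ((k : ℝ) + 1) / M.pmin ^ k := final
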